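/- Let (H,R) be a coquasitriangular bialgebra and let σ(a⊗b) = R⁻¹(a₁⊗b₁) b₂⊗a₂ R(a₃⊗b₃). Then σ∘σ = Id_{H⊗H} if and only if the convolution products satisfy Id_{H⊗H} ∗ (R^op ∗ R) = (R^op ∗ R) ∗ Id_{H⊗H}. In particular, if R is cotriangular (R^op = R⁻¹), then σ is involutive. -/

import Mathlib

open TensorProduct

noncomputable section

variable (k H : Type*) [Field k] [Ring H] [Bialgebra k H]

/-- Multiplication of `H` as a linear map. -/
def mu : H ⊗[k] H →ₗ[k] H := LinearMap.mul' k H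
/-- Comultiplication. -/
def delta : H →ₗ[k] H ⊗[k] H := Coalgebra.comul
/-- Counit. -/
def eps : H →ₗ[k] k := Coalgebra.counit
/-- Flip `a⊗b ↦ b⊗a`. -/
def tau : H ⊗[k] H →ₗ[k] H ⊗[k] H := (TensorProduct.comm k H H).toLinearMap
/-- Associator. -/
def assocMap : (H ⊗[k] H) ⊗[k] H →ₗ[k] H ⊗[k] (H ⊗[k] H) :=
  (TensorProduct.assoc k H H H).toLinearMap
/-- Inverse associator. -/
def assocInv : H ⊗[k] (H ⊗[k] H) →ₗ[k] (H ⊗[k] H) ⊗[k] H :=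
  (TensorProduct.assoc k H H H).symm.toLinearMap
/-- The middle-four interchange `(a⊗b)⊗(c⊗d) ↦ (a⊗c)⊗(b⊗d)`. -/
def ttcMap : (H ⊗[k] H) ⊗[k] (H ⊗[k] H) →ₗ[k] (H ⊗[k] H) ⊗[k] (H ⊗[k] H) :=
  (TensorProduct.tensorTensorTensorComm k H H H H).toLinearMap
/-- `a⊗b ↦ (a₁⊗b₁)⊗(a₂⊗b₂)` (Sweedler notation). -/
def dd : H ⊗[k] H →ₗ[k] (H ⊗[k] H) ⊗[k] (H ⊗[k] H) :=
  ttcMap k H ∘ₗ map (delta k H) (delta k H)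
/-- `a⊗b ↦ ((a₁⊗b₁)⊗(a₂⊗b₂))⊗(a₃⊗b₃)`. -/
def ddd : H ⊗[k] H →ₗ[k] ((H ⊗[k] H) ⊗[k] (H ⊗[k] H)) ⊗[k] (H ⊗[k] H) :=
  map (dd k H) LinearMap.id ∘ₗ dd k H
/-- `a⊗b ↦ ε(a)ε(b)`. -/
def epseps : H ⊗[k] H →ₗ[k] k := LinearMap.mul' k k ∘ₗ map (eps k H) (eps k H)
/-- `σ(a⊗b) = (a₁⇀b₁)⊗(a₂↼b₂)` attached to a pair of "actions". -/
def sig (l r : H ⊗[k] H →ₗ[k] H) : H ⊗[k] H →ₗ[k] H ⊗[k] H :=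
  map l r ∘ₗ dd k H


/-- `σ(a⊗b) = R⁻¹(a₁⊗b₁) b₂⊗a₂ R(a₃⊗b₃)`. -/
def sigR (R Ri : H ⊗[k] H →ₗ[k] k) : H ⊗[k] H →ₗ[k] H ⊗[k] H :=
  (TensorProduct.rid k (H ⊗[k] H)).toLinearMap ∘ₗ
    map ((TensorProduct.lid k (H ⊗[k] H)).toLinearMap ∘ₗ map Ri (tau k H)) R ∘ₗ ddd k H

/-- The quantum Killing form `Q := R^op ∗ R`, a linear form on the coalgebra `H⊗H`. -/
def killing (R : H ⊗[k] H →ₗ[k] k) : H ⊗[k] H →ₗ[k] k :=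
  LinearMap.mul' k k ∘ₗ map (R ∘ₗ tau k H) R ∘ₗ dd k H


/-! ### Generic plumbing lemmas -/

section Plumbing
variable {M N P Q M' N' P' Q' : Type*}
  [AddCommGroup M] [AddCommGroup N] [AddCommGroup P] [AddCommGroup Q]
  [AddCommGroup M'] [AddCommGroup N'] [AddCommGroup P'] [AddCommGroup Q']
  [Module k M] [Module k N] [Module k P] [Module k Q]
  [Module k M'] [Module k N'] [Module k P'] [Module k Q']

lemma nat_lid (f : M →ₗ[k] N) :
    f ∘ₗ (TensorProduct.lid k M).toLinearMap
      = (TensorProduct.lid k N).toLinearMap ∘ₗ map LinearMap.id f := by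
  ext x; simp

lemma nat_rid (f : M →ₗ[k] N) :
    f ∘ₗ (TensorProduct.rid k M).toLinearMap
      = (TensorProduct.rid k N).toLinearMap ∘ₗ map f LinearMap.id := by
  ext x; simp

lemma nat_comm (f : M →ₗ[k] M') (g : N →ₗ[k] N') :
    map g f ∘ₗ (TensorProduct.comm k M N).toLinearMap
      = (TensorProduct.comm k M' N').toLinearMap ∘ₗ map f g := by
  ext x y; simp

lemma nat_ttc (f : M →ₗ[k] M') (g : N →ₗ[k] N') (h : P →ₗ[k] P') (l : Q →ₗ[k] Q') :
    (tensorTensorTensorComm k M' N' P' Q').toLinearMap ∘ₗ map (map f g) (map h l)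
      = map (map f h) (map g l) ∘ₗ (tensorTensorTensorComm k M N P Q).toLinearMap := by
  ext; simp

set_option maxRecDepth 4000 in
set_option maxRecDepth 4000 in
lemma P_Tlcomp (φ ψ : M →ₗ[k] k) :
    (TensorProduct.lid k M).toLinearMap ∘ₗ map φ LinearMap.id
      ∘ₗ (TensorProduct.lid k (M ⊗[k] M)).toLinearMap ∘ₗ map ψ LinearMap.id
      ∘ₗ (TensorProduct.assoc k M M M).toLinearMap
    = (TensorProduct.lid k M).toLinearMap ∘ₗ map (LinearMap.mul' k k) LinearMap.id
      ∘ₗ map (map ψ φ) LinearMap.id := by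
  ext x y z
  simp only [LinearMap.coe_comp, Function.comp_apply, LinearEquiv.coe_coe, assoc_tmul,
    map_tmul, LinearMap.id_coe, id_eq, lid_tmul, rid_tmul, LinearMap.mul'_apply, map_smul,
    smul_smul, AlgebraTensorModule.curry_apply, curry_apply, LinearMap.coe_restrictScalars,
    LinearMap.smul_apply, tmul_smul, smul_tmul', smul_eq_mul]
  try rw [mul_comm]

set_option maxRecDepth 4000 in
lemma P_Trcomp (φ ψ : M →ₗ[k] k) :
    (TensorProduct.rid k M).toLinearMap ∘ₗ map LinearMap.id φ
      ∘ₗ (TensorProduct.rid k (M ⊗[k] M)).toLinearMap ∘ₗ map LinearMap.id ψ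
    = (TensorProduct.rid k M).toLinearMap ∘ₗ map LinearMap.id (LinearMap.mul' k k)
      ∘ₗ map LinearMap.id (map φ ψ) ∘ₗ (TensorProduct.assoc k M M M).toLinearMap := by
  ext x y z
  simp only [LinearMap.coe_comp, Function.comp_apply, LinearEquiv.coe_coe, assoc_tmul,
    map_tmul, LinearMap.id_coe, id_eq, lid_tmul, rid_tmul, LinearMap.mul'_apply, map_smul,
    smul_smul, AlgebraTensorModule.curry_apply, curry_apply, LinearMap.coe_restrictScalars,
    LinearMap.smul_apply, tmul_smul, smul_tmul', smul_eq_mul]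
  try rw [mul_comm]

set_option maxRecDepth 4000 in
lemma P_TlTr (φ ψ : M →ₗ[k] k) :
    (TensorProduct.lid k M).toLinearMap ∘ₗ map φ LinearMap.id
      ∘ₗ (TensorProduct.rid k (M ⊗[k] M)).toLinearMap ∘ₗ map LinearMap.id ψ
    = (TensorProduct.rid k M).toLinearMap ∘ₗ map LinearMap.id ψ
      ∘ₗ (TensorProduct.lid k (M ⊗[k] M)).toLinearMap ∘ₗ map φ LinearMap.id
      ∘ₗ (TensorProduct.assoc k M M M).toLinearMap := by
  ext x y z
  simp only [LinearMap.coe_comp, Function.comp_apply, LinearEquiv.coe_coe, assoc_tmul,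
    map_tmul, LinearMap.id_coe, id_eq, lid_tmul, rid_tmul, LinearMap.mul'_apply, map_smul,
    smul_smul, AlgebraTensorModule.curry_apply, curry_apply, LinearMap.coe_restrictScalars,
    LinearMap.smul_apply, tmul_smul, smul_tmul', smul_eq_mul]
  try rw [mul_comm]

set_option maxRecDepth 4000 in
lemma P_cvassoc (φ ψ χ : M →ₗ[k] k) :
    LinearMap.mul' k k ∘ₗ map (LinearMap.mul' k k) LinearMap.id
      ∘ₗ map (map φ ψ) LinearMap.id ∘ₗ map LinearMap.id χ
    = LinearMap.mul' k k ∘ₗ map LinearMap.id (LinearMap.mul' k k)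
      ∘ₗ map LinearMap.id (map ψ χ) ∘ₗ map φ LinearMap.id
      ∘ₗ (TensorProduct.assoc k M M M).toLinearMap := by
  ext x y z
  simp [mul_assoc]

end Plumbing

/-! ### Counit and coassociativity for `H` in `map` form -/

lemma hH1 : (TensorProduct.lid k H).toLinearMap ∘ₗ map (eps k H) LinearMap.id ∘ₗ delta k H
    = LinearMap.id := by
  ext x
  show (TensorProduct.lid k H) ((Coalgebra.counit (R := k)).rTensor H (Coalgebra.comul x)) = x
  simp

lemma hH2 : (TensorProduct.rid k H).toLinearMap ∘ₗ map LinearMap.id (eps k H) ∘ₗ delta k H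
    = LinearMap.id := by
  ext x
  show (TensorProduct.rid k H) ((Coalgebra.counit (R := k)).lTensor H (Coalgebra.comul x)) = x
  simp

lemma hH3 : map LinearMap.id (delta k H) ∘ₗ delta k H
    = (TensorProduct.assoc k H H H).toLinearMap ∘ₗ map (delta k H) LinearMap.id ∘ₗ delta k H := by
  exact (Coalgebra.coassoc (R := k) (A := H)).symm

/-! ### Convolution operators on `H ⊗ H` -/

def Tl (φ : H ⊗[k] H →ₗ[k] k) : H ⊗[k] H →ₗ[k] H ⊗[k] H :=
  (TensorProduct.lid k (H ⊗[k] H)).toLinearMap ∘ₗ map φ LinearMap.id ∘ₗ dd k H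

def Tr (φ : H ⊗[k] H →ₗ[k] k) : H ⊗[k] H →ₗ[k] H ⊗[k] H :=
  (TensorProduct.rid k (H ⊗[k] H)).toLinearMap ∘ₗ map LinearMap.id φ ∘ₗ dd k H

def cv (φ ψ : H ⊗[k] H →ₗ[k] k) : H ⊗[k] H →ₗ[k] k :=
  LinearMap.mul' k k ∘ₗ map φ ψ ∘ₗ dd k H

/-- counit law (left) for `dd`. -/
lemma Tl_eps : Tl k H (epseps k H) = LinearMap.id := by
  have P : (TensorProduct.lid k (H ⊗[k] H)).toLinearMap
        ∘ₗ map (epseps k H) LinearMap.id ∘ₗ ttcMap k H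
      = map ((TensorProduct.lid k H).toLinearMap ∘ₗ map (eps k H) LinearMap.id)
          ((TensorProduct.lid k H).toLinearMap ∘ₗ map (eps k H) LinearMap.id) := by
    ext a b c d
    simp only [LinearMap.coe_comp, Function.comp_apply, LinearEquiv.coe_coe, ttcMap,
      tensorTensorTensorComm_tmul, map_tmul, LinearMap.id_coe, id_eq, lid_tmul, epseps,
      LinearMap.mul'_apply, AlgebraTensorModule.curry_apply, curry_apply,
      LinearMap.coe_restrictScalars]
    rw [mul_smul, smul_tmul', smul_tmul, smul_tmul']
  have : Tl k H (epseps k H)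
      = (map ((TensorProduct.lid k H).toLinearMap ∘ₗ map (eps k H) LinearMap.id)
          ((TensorProduct.lid k H).toLinearMap ∘ₗ map (eps k H) LinearMap.id))
        ∘ₗ map (delta k H) (delta k H) := by
    rw [Tl, dd, ← P]; rfl
  rw [this, ← TensorProduct.map_comp]
  rw [show ((TensorProduct.lid k H).toLinearMap ∘ₗ map (eps k H) LinearMap.id) ∘ₗ delta k H
      = (TensorProduct.lid k H).toLinearMap ∘ₗ map (eps k H) LinearMap.id ∘ₗ delta k H from
      (LinearMap.comp_assoc _ _ _), hH1, TensorProduct.map_id]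

/-- counit law (right) for `dd`. -/
lemma Tr_eps : Tr k H (epseps k H) = LinearMap.id := by
  have P : (TensorProduct.rid k (H ⊗[k] H)).toLinearMap
        ∘ₗ map LinearMap.id (epseps k H) ∘ₗ ttcMap k H
      = map ((TensorProduct.rid k H).toLinearMap ∘ₗ map LinearMap.id (eps k H))
          ((TensorProduct.rid k H).toLinearMap ∘ₗ map LinearMap.id (eps k H)) := by
    ext a b c d
    simp only [LinearMap.coe_comp, Function.comp_apply, LinearEquiv.coe_coe, ttcMap,
      tensorTensorTensorComm_tmul, map_tmul, LinearMap.id_coe, id_eq, rid_tmul, epseps,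
      LinearMap.mul'_apply, AlgebraTensorModule.curry_apply, curry_apply,
      LinearMap.coe_restrictScalars]
    rw [mul_smul, smul_tmul', smul_tmul, smul_tmul']
  have : Tr k H (epseps k H)
      = (map ((TensorProduct.rid k H).toLinearMap ∘ₗ map LinearMap.id (eps k H))
          ((TensorProduct.rid k H).toLinearMap ∘ₗ map LinearMap.id (eps k H)))
        ∘ₗ map (delta k H) (delta k H) := by
    rw [Tr, dd, ← P]; rfl
  rw [this, ← TensorProduct.map_comp]
  rw [show ((TensorProduct.rid k H).toLinearMap ∘ₗ map LinearMap.id (eps k H)) ∘ₗ delta k H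
      = (TensorProduct.rid k H).toLinearMap ∘ₗ map LinearMap.id (eps k H) ∘ₗ delta k H from
      (LinearMap.comp_assoc _ _ _), hH2, TensorProduct.map_id]

/-- `tau` is a coalgebra map for `dd`. -/
lemma dd_tau : dd k H ∘ₗ tau k H = map (tau k H) (tau k H) ∘ₗ dd k H := by
  have P : ttcMap k H ∘ₗ (TensorProduct.comm k (H ⊗[k] H) (H ⊗[k] H)).toLinearMap
      = map (tau k H) (tau k H) ∘ₗ ttcMap k H := by
    ext a b c d; simp [ttcMap, tau]
  apply LinearMap.ext; intro x
  simp only [dd, tau, LinearMap.coe_comp, Function.comp_apply]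
  have h1 : map (delta k H) (delta k H) ((TensorProduct.comm k H H).toLinearMap x)
      = (TensorProduct.comm k (H ⊗[k] H) (H ⊗[k] H)).toLinearMap
          (map (delta k H) (delta k H) x) := by
    simpa only [LinearMap.coe_comp, Function.comp_apply] using
      LinearMap.congr_fun (nat_comm k (delta k H) (delta k H)) x
  rw [h1]
  simpa only [LinearMap.coe_comp, Function.comp_apply, tau] using
    LinearMap.congr_fun P (map (delta k H) (delta k H) x)

/-- `epseps` is invariant under `tau`. -/
lemma eps_tau : epseps k H ∘ₗ tau k H = epseps k H := by
  ext a b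
  simp [epseps, tau, mul_comm]

/-- Coassociativity of `dd`. -/
lemma dd_coassoc :
    map LinearMap.id (dd k H) ∘ₗ dd k H
      = (TensorProduct.assoc k (H ⊗[k] H) (H ⊗[k] H) (H ⊗[k] H)).toLinearMap
          ∘ₗ map (dd k H) LinearMap.id ∘ₗ dd k H := by
  have N1 : map (LinearMap.id (R := k) (M := H ⊗[k] H)) (map (delta k H) (delta k H))
        ∘ₗ ttcMap k H
      = (tensorTensorTensorComm k H (H ⊗[k] H) H (H ⊗[k] H)).toLinearMap
        ∘ₗ map (map LinearMap.id (delta k H)) (map LinearMap.id (delta k H)) := by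
    have h := nat_ttc k (LinearMap.id (R := k) (M := H)) (delta k H)
      (LinearMap.id (R := k) (M := H)) (delta k H)
    rw [TensorProduct.map_id] at h
    exact h.symm
  have N2 : map (map (delta k H) (delta k H)) (LinearMap.id (R := k) (M := H ⊗[k] H))
        ∘ₗ ttcMap k H
      = (tensorTensorTensorComm k (H ⊗[k] H) H (H ⊗[k] H) H).toLinearMap
        ∘ₗ map (map (delta k H) LinearMap.id) (map (delta k H) LinearMap.id) := by
    have h := nat_ttc k (delta k H) (LinearMap.id (R := k) (M := H))
      (delta k H) (LinearMap.id (R := k) (M := H))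
    rw [TensorProduct.map_id] at h
    exact h.symm
  have P3 : map (LinearMap.id (R := k) (M := H ⊗[k] H)) (ttcMap k H)
        ∘ₗ (tensorTensorTensorComm k H (H ⊗[k] H) H (H ⊗[k] H)).toLinearMap
        ∘ₗ map (TensorProduct.assoc k H H H).toLinearMap (TensorProduct.assoc k H H H).toLinearMap
      = (TensorProduct.assoc k (H ⊗[k] H) (H ⊗[k] H) (H ⊗[k] H)).toLinearMap
        ∘ₗ map (ttcMap k H) LinearMap.id
        ∘ₗ (tensorTensorTensorComm k (H ⊗[k] H) H (H ⊗[k] H) H).toLinearMap := by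
    ext a b c d e f
    simp [ttcMap]
  apply LinearMap.ext; intro x
  simp only [LinearMap.coe_comp, Function.comp_apply]
  -- unfold the outer dd's
  rw [show dd k H x = ttcMap k H (map (delta k H) (delta k H) x) from rfl]
  set y := map (delta k H) (delta k H) x with hy
  set u := map (map (delta k H) LinearMap.id ∘ₗ delta k H)
    (map (delta k H) LinearMap.id ∘ₗ delta k H) x with hu
  -- left side
  have L1 : map LinearMap.id (dd k H) (ttcMap k H y)
      = map LinearMap.id (ttcMap k H)
          (map LinearMap.id (map (delta k H) (delta k H)) (ttcMap k H y)) := by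
    rw [dd, show (LinearMap.id : H ⊗[k] H →ₗ[k] H ⊗[k] H)
        = LinearMap.id ∘ₗ LinearMap.id from rfl, TensorProduct.map_comp]
    simp only [LinearMap.coe_comp, Function.comp_apply, LinearMap.id_comp]
  have L2 : map LinearMap.id (map (delta k H) (delta k H)) (ttcMap k H y)
      = (tensorTensorTensorComm k H (H ⊗[k] H) H (H ⊗[k] H)).toLinearMap
          (map (map LinearMap.id (delta k H)) (map LinearMap.id (delta k H)) y) := by
    simpa only [LinearMap.coe_comp, Function.comp_apply] using LinearMap.congr_fun N1 y
  have L3 : map (map LinearMap.id (delta k H)) (map LinearMap.id (delta k H)) y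
      = map (TensorProduct.assoc k H H H).toLinearMap (TensorProduct.assoc k H H H).toLinearMap
          u := by
    rw [hy, hu, ← LinearMap.comp_apply, ← TensorProduct.map_comp, hH3,
      ← LinearMap.comp_apply, ← TensorProduct.map_comp]
  -- right side
  have R1 : map (dd k H) LinearMap.id (ttcMap k H y)
      = map (ttcMap k H) LinearMap.id
          (map (map (delta k H) (delta k H)) LinearMap.id (ttcMap k H y)) := by
    rw [dd, show (LinearMap.id : H ⊗[k] H →ₗ[k] H ⊗[k] H)
        = LinearMap.id ∘ₗ LinearMap.id from rfl, TensorProduct.map_comp]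
    simp only [LinearMap.coe_comp, Function.comp_apply, LinearMap.id_comp]
  have R2 : map (map (delta k H) (delta k H)) LinearMap.id (ttcMap k H y)
      = (tensorTensorTensorComm k (H ⊗[k] H) H (H ⊗[k] H) H).toLinearMap
          (map (map (delta k H) LinearMap.id) (map (delta k H) LinearMap.id) y) := by
    simpa only [LinearMap.coe_comp, Function.comp_apply] using LinearMap.congr_fun N2 y
  have R3 : map (map (delta k H) LinearMap.id) (map (delta k H) LinearMap.id) y = u := by
    rw [hy, hu, ← LinearMap.comp_apply, ← TensorProduct.map_comp]
  rw [L1, L2, L3, R1, R2, R3]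
  simpa only [LinearMap.coe_comp, Function.comp_apply] using LinearMap.congr_fun P3 u

lemma Tl_comp (φ ψ : H ⊗[k] H →ₗ[k] k) :
    Tl k H φ ∘ₗ Tl k H ψ = Tl k H (cv k H ψ φ) := by
  have swap1 : map (LinearMap.id (R := k) (M := k)) (dd k H) ∘ₗ map ψ LinearMap.id
      = map ψ LinearMap.id ∘ₗ map (LinearMap.id (R := k) (M := H ⊗[k] H)) (dd k H) := by
    ext; simp
  have split1 : map (LinearMap.mul' k k ∘ₗ map ψ φ ∘ₗ dd k H)
        (LinearMap.id (R := k) (M := H ⊗[k] H))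
      = map (LinearMap.mul' k k) LinearMap.id ∘ₗ map (map ψ φ) LinearMap.id
        ∘ₗ map (dd k H) LinearMap.id := by
    ext; simp
  apply LinearMap.ext; intro x
  simp only [Tl, cv, LinearMap.coe_comp, Function.comp_apply, LinearEquiv.coe_coe]
  set v := map (dd k H) LinearMap.id (dd k H x) with hv
  have h1 : dd k H ((TensorProduct.lid k (H ⊗[k] H)) (map ψ LinearMap.id (dd k H x)))
      = (TensorProduct.lid k ((H ⊗[k] H) ⊗[k] (H ⊗[k] H)))
          (map LinearMap.id (dd k H) (map ψ LinearMap.id (dd k H x))) := by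
    simpa only [LinearMap.coe_comp, Function.comp_apply, LinearEquiv.coe_coe] using
      LinearMap.congr_fun (nat_lid k (dd k H)) (map ψ LinearMap.id (dd k H x))
  have h2 : map LinearMap.id (dd k H) (map ψ LinearMap.id (dd k H x))
      = map ψ LinearMap.id (map LinearMap.id (dd k H) (dd k H x)) := by
    simpa only [LinearMap.coe_comp, Function.comp_apply] using
      LinearMap.congr_fun swap1 (dd k H x)
  have h3 : map LinearMap.id (dd k H) (dd k H x)
      = (TensorProduct.assoc k (H ⊗[k] H) (H ⊗[k] H) (H ⊗[k] H)).toLinearMap v := by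
    simpa only [LinearMap.coe_comp, Function.comp_apply] using
      LinearMap.congr_fun (dd_coassoc k H) x
  have h4 : map (LinearMap.mul' k k ∘ₗ map ψ φ ∘ₗ dd k H) LinearMap.id (dd k H x)
      = map (LinearMap.mul' k k) LinearMap.id (map (map ψ φ) LinearMap.id v) := by
    simpa only [LinearMap.coe_comp, Function.comp_apply] using
      LinearMap.congr_fun split1 (dd k H x)
  rw [h1, h2, h3, h4]
  simpa only [LinearMap.coe_comp, Function.comp_apply, LinearEquiv.coe_coe] using
    LinearMap.congr_fun (P_Tlcomp k φ ψ) v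

lemma Tr_comp (φ ψ : H ⊗[k] H →ₗ[k] k) :
    Tr k H φ ∘ₗ Tr k H ψ = Tr k H (cv k H φ ψ) := by
  have swap1 : map (dd k H) (LinearMap.id (R := k) (M := k))
        ∘ₗ map (LinearMap.id (R := k) (M := H ⊗[k] H)) ψ
      = map LinearMap.id ψ ∘ₗ map (dd k H) (LinearMap.id (R := k) (M := H ⊗[k] H)) := by
    ext; simp
  have split1 : map (LinearMap.id (R := k) (M := H ⊗[k] H))
        (LinearMap.mul' k k ∘ₗ map φ ψ ∘ₗ dd k H)
      = map LinearMap.id (LinearMap.mul' k k) ∘ₗ map LinearMap.id (map φ ψ)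
        ∘ₗ map LinearMap.id (dd k H) := by
    ext; simp
  apply LinearMap.ext; intro x
  simp only [Tr, cv, LinearMap.coe_comp, Function.comp_apply, LinearEquiv.coe_coe]
  set v := map (dd k H) LinearMap.id (dd k H x) with hv
  have h1 : dd k H ((TensorProduct.rid k (H ⊗[k] H)) (map LinearMap.id ψ (dd k H x)))
      = (TensorProduct.rid k ((H ⊗[k] H) ⊗[k] (H ⊗[k] H)))
          (map (dd k H) LinearMap.id (map LinearMap.id ψ (dd k H x))) := by
    simpa only [LinearMap.coe_comp, Function.comp_apply, LinearEquiv.coe_coe] using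
      LinearMap.congr_fun (nat_rid k (dd k H)) (map LinearMap.id ψ (dd k H x))
  have h2 : map (dd k H) LinearMap.id (map LinearMap.id ψ (dd k H x))
      = map LinearMap.id ψ (map (dd k H) LinearMap.id (dd k H x)) := by
    simpa only [LinearMap.coe_comp, Function.comp_apply] using
      LinearMap.congr_fun swap1 (dd k H x)
  have h3 : map LinearMap.id (dd k H) (dd k H x)
      = (TensorProduct.assoc k (H ⊗[k] H) (H ⊗[k] H) (H ⊗[k] H)).toLinearMap v := by
    simpa only [LinearMap.coe_comp, Function.comp_apply] using
      LinearMap.congr_fun (dd_coassoc k H) x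
  have h4 : map LinearMap.id (LinearMap.mul' k k ∘ₗ map φ ψ ∘ₗ dd k H) (dd k H x)
      = map LinearMap.id (LinearMap.mul' k k)
          (map LinearMap.id (map φ ψ) (map LinearMap.id (dd k H) (dd k H x))) := by
    simpa only [LinearMap.coe_comp, Function.comp_apply] using
      LinearMap.congr_fun split1 (dd k H x)
  rw [h1, h2, h4, h3]
  simpa only [LinearMap.coe_comp, Function.comp_apply, LinearEquiv.coe_coe] using
    LinearMap.congr_fun (P_Trcomp k φ ψ) v

lemma TlTr_comm (φ ψ : H ⊗[k] H →ₗ[k] k) :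
    Tl k H φ ∘ₗ Tr k H ψ = Tr k H ψ ∘ₗ Tl k H φ := by
  have swapL : map (LinearMap.id (R := k) (M := k)) (dd k H) ∘ₗ map φ LinearMap.id
      = map φ LinearMap.id ∘ₗ map (LinearMap.id (R := k) (M := H ⊗[k] H)) (dd k H) := by
    ext; simp
  have swapR : map (dd k H) (LinearMap.id (R := k) (M := k))
        ∘ₗ map (LinearMap.id (R := k) (M := H ⊗[k] H)) ψ
      = map LinearMap.id ψ ∘ₗ map (dd k H) (LinearMap.id (R := k) (M := H ⊗[k] H)) := by
    ext; simp
  apply LinearMap.ext; intro x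
  simp only [Tl, Tr, LinearMap.coe_comp, Function.comp_apply, LinearEquiv.coe_coe]
  set v := map (dd k H) LinearMap.id (dd k H x) with hv
  have h1 : dd k H ((TensorProduct.rid k (H ⊗[k] H)) (map LinearMap.id ψ (dd k H x)))
      = (TensorProduct.rid k ((H ⊗[k] H) ⊗[k] (H ⊗[k] H)))
          (map (dd k H) LinearMap.id (map LinearMap.id ψ (dd k H x))) := by
    simpa only [LinearMap.coe_comp, Function.comp_apply, LinearEquiv.coe_coe] using
      LinearMap.congr_fun (nat_rid k (dd k H)) (map LinearMap.id ψ (dd k H x))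
  have h2 : map (dd k H) LinearMap.id (map LinearMap.id ψ (dd k H x))
      = map LinearMap.id ψ v := by
    simpa only [LinearMap.coe_comp, Function.comp_apply] using
      LinearMap.congr_fun swapR (dd k H x)
  have h3 : dd k H ((TensorProduct.lid k (H ⊗[k] H)) (map φ LinearMap.id (dd k H x)))
      = (TensorProduct.lid k ((H ⊗[k] H) ⊗[k] (H ⊗[k] H)))
          (map LinearMap.id (dd k H) (map φ LinearMap.id (dd k H x))) := by
    simpa only [LinearMap.coe_comp, Function.comp_apply, LinearEquiv.coe_coe] using
      LinearMap.congr_fun (nat_lid k (dd k H)) (map φ LinearMap.id (dd k H x))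
  have h4 : map LinearMap.id (dd k H) (map φ LinearMap.id (dd k H x))
      = map φ LinearMap.id (map LinearMap.id (dd k H) (dd k H x)) := by
    simpa only [LinearMap.coe_comp, Function.comp_apply] using
      LinearMap.congr_fun swapL (dd k H x)
  have h5 : map LinearMap.id (dd k H) (dd k H x)
      = (TensorProduct.assoc k (H ⊗[k] H) (H ⊗[k] H) (H ⊗[k] H)).toLinearMap v := by
    simpa only [LinearMap.coe_comp, Function.comp_apply] using
      LinearMap.congr_fun (dd_coassoc k H) x
  rw [h1, h2, h3, h4, h5]
  simpa only [LinearMap.coe_comp, Function.comp_apply, LinearEquiv.coe_coe] using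
    LinearMap.congr_fun (P_TlTr k φ ψ) v

lemma cv_assoc (φ ψ χ : H ⊗[k] H →ₗ[k] k) :
    cv k H (cv k H φ ψ) χ = cv k H φ (cv k H ψ χ) := by
  have splitL : map (LinearMap.mul' k k ∘ₗ map φ ψ ∘ₗ dd k H) χ
      = map (LinearMap.mul' k k) LinearMap.id ∘ₗ map (map φ ψ) LinearMap.id
        ∘ₗ map (LinearMap.id (R := k) (M := (H ⊗[k] H) ⊗[k] (H ⊗[k] H))) χ
        ∘ₗ map (dd k H) (LinearMap.id (R := k) (M := H ⊗[k] H)) := by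
    ext; simp
  have splitR : map φ (LinearMap.mul' k k ∘ₗ map ψ χ ∘ₗ dd k H)
      = map LinearMap.id (LinearMap.mul' k k) ∘ₗ map LinearMap.id (map ψ χ)
        ∘ₗ map φ (LinearMap.id (R := k) (M := (H ⊗[k] H) ⊗[k] (H ⊗[k] H)))
        ∘ₗ map (LinearMap.id (R := k) (M := H ⊗[k] H)) (dd k H) := by
    ext; simp
  apply LinearMap.ext; intro x
  simp only [cv, LinearMap.coe_comp, Function.comp_apply]
  set v := map (dd k H) LinearMap.id (dd k H x) with hv
  have h1 : map (LinearMap.mul' k k ∘ₗ map φ ψ ∘ₗ dd k H) χ (dd k H x)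
      = map (LinearMap.mul' k k) LinearMap.id
          (map (map φ ψ) LinearMap.id (map LinearMap.id χ v)) := by
    simpa only [LinearMap.coe_comp, Function.comp_apply] using
      LinearMap.congr_fun splitL (dd k H x)
  have h2 : map φ (LinearMap.mul' k k ∘ₗ map ψ χ ∘ₗ dd k H) (dd k H x)
      = map LinearMap.id (LinearMap.mul' k k)
          (map LinearMap.id (map ψ χ)
            (map φ LinearMap.id (map LinearMap.id (dd k H) (dd k H x)))) := by
    simpa only [LinearMap.coe_comp, Function.comp_apply] using
      LinearMap.congr_fun splitR (dd k H x)
  have h3 : map LinearMap.id (dd k H) (dd k H x)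
      = (TensorProduct.assoc k (H ⊗[k] H) (H ⊗[k] H) (H ⊗[k] H)).toLinearMap v := by
    simpa only [LinearMap.coe_comp, Function.comp_apply] using
      LinearMap.congr_fun (dd_coassoc k H) x
  rw [h1, h2, h3]
  simpa only [LinearMap.coe_comp, Function.comp_apply, LinearEquiv.coe_coe] using
    LinearMap.congr_fun (P_cvassoc k φ ψ χ) v

lemma cv_eps_left (φ : H ⊗[k] H →ₗ[k] k) : cv k H (epseps k H) φ = φ := by
  apply LinearMap.ext; intro x
  simp only [cv, LinearMap.coe_comp, Function.comp_apply]
  have h0 : map (epseps k H) LinearMap.id (dd k H x) = (1 : k) ⊗ₜ[k] x := by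
    have := LinearMap.congr_fun (Tl_eps k H) x
    simp only [Tl, LinearMap.coe_comp, Function.comp_apply, LinearEquiv.coe_coe,
      LinearMap.id_coe, id_eq] at this
    have h := congrArg (TensorProduct.lid k (H ⊗[k] H)).symm this
    rwa [LinearEquiv.symm_apply_apply, TensorProduct.lid_symm_apply] at h
  have h1 : map (epseps k H) φ (dd k H x)
      = map LinearMap.id φ (map (epseps k H) LinearMap.id (dd k H x)) := by
    have : map (epseps k H) φ = map (LinearMap.id (R := k) (M := k)) φ
        ∘ₗ map (epseps k H) (LinearMap.id (R := k) (M := H ⊗[k] H)) := by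
      ext; simp
    simpa only [LinearMap.coe_comp, Function.comp_apply] using
      LinearMap.congr_fun this (dd k H x)
  rw [h1, h0]
  simp

lemma cv_eps_right (φ : H ⊗[k] H →ₗ[k] k) : cv k H φ (epseps k H) = φ := by
  apply LinearMap.ext; intro x
  simp only [cv, LinearMap.coe_comp, Function.comp_apply]
  have h0 : map LinearMap.id (epseps k H) (dd k H x) = x ⊗ₜ[k] (1 : k) := by
    have := LinearMap.congr_fun (Tr_eps k H) x
    simp only [Tr, LinearMap.coe_comp, Function.comp_apply, LinearEquiv.coe_coe,
      LinearMap.id_coe, id_eq] at this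
    have h := congrArg (TensorProduct.rid k (H ⊗[k] H)).symm this
    rwa [LinearEquiv.symm_apply_apply, TensorProduct.rid_symm_apply] at h
  have h1 : map φ (epseps k H) (dd k H x)
      = map φ LinearMap.id (map LinearMap.id (epseps k H) (dd k H x)) := by
    have : map φ (epseps k H) = map φ (LinearMap.id (R := k) (M := k))
        ∘ₗ map (LinearMap.id (R := k) (M := H ⊗[k] H)) (epseps k H) := by
      ext; simp
    simpa only [LinearMap.coe_comp, Function.comp_apply] using
      LinearMap.congr_fun this (dd k H x)
  rw [h1, h0]
  simp

lemma cv_op (φ ψ : H ⊗[k] H →ₗ[k] k) :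
    cv k H (φ ∘ₗ tau k H) (ψ ∘ₗ tau k H) = cv k H φ ψ ∘ₗ tau k H := by
  apply LinearMap.ext; intro x
  simp only [cv, LinearMap.coe_comp, Function.comp_apply]
  have h1 : dd k H (tau k H x) = map (tau k H) (tau k H) (dd k H x) := by
    simpa only [LinearMap.coe_comp, Function.comp_apply] using
      LinearMap.congr_fun (dd_tau k H) x
  have h2 : map φ ψ (map (tau k H) (tau k H) (dd k H x))
      = map (φ ∘ₗ tau k H) (ψ ∘ₗ tau k H) (dd k H x) := by
    rw [← LinearMap.comp_apply, ← TensorProduct.map_comp]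
  rw [h1, h2]

lemma tau_invol : tau k H ∘ₗ tau k H = LinearMap.id (R := k) (M := H ⊗[k] H) := by
  ext; simp [tau]

lemma tau_Tl (φ : H ⊗[k] H →ₗ[k] k) :
    tau k H ∘ₗ Tl k H φ ∘ₗ tau k H = Tl k H (φ ∘ₗ tau k H) := by
  have swap : map φ (LinearMap.id (R := k) (M := H ⊗[k] H)) ∘ₗ map (tau k H) (tau k H)
      = map (LinearMap.id (R := k) (M := k)) (tau k H)
        ∘ₗ map (φ ∘ₗ tau k H) LinearMap.id := by
    ext; simp
  have P : tau k H ∘ₗ (TensorProduct.lid k (H ⊗[k] H)).toLinearMap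
        ∘ₗ map (LinearMap.id (R := k) (M := k)) (tau k H)
      = (TensorProduct.lid k (H ⊗[k] H)).toLinearMap := by
    ext; simp [tau]
  apply LinearMap.ext; intro x
  simp only [Tl, LinearMap.coe_comp, Function.comp_apply, LinearEquiv.coe_coe]
  have h1 : dd k H (tau k H x) = map (tau k H) (tau k H) (dd k H x) := by
    simpa only [LinearMap.coe_comp, Function.comp_apply] using
      LinearMap.congr_fun (dd_tau k H) x
  have h2 : map φ LinearMap.id (map (tau k H) (tau k H) (dd k H x))
      = map LinearMap.id (tau k H) (map (φ ∘ₗ tau k H) LinearMap.id (dd k H x)) := by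
    simpa only [LinearMap.coe_comp, Function.comp_apply] using
      LinearMap.congr_fun swap (dd k H x)
  rw [h1, h2]
  simpa only [LinearMap.coe_comp, Function.comp_apply, LinearEquiv.coe_coe] using
    LinearMap.congr_fun P (map (φ ∘ₗ tau k H) LinearMap.id (dd k H x))

lemma tau_Tr (φ : H ⊗[k] H →ₗ[k] k) :
    tau k H ∘ₗ Tr k H φ ∘ₗ tau k H = Tr k H (φ ∘ₗ tau k H) := by
  have swap : map (LinearMap.id (R := k) (M := H ⊗[k] H)) φ ∘ₗ map (tau k H) (tau k H)
      = map (tau k H) (LinearMap.id (R := k) (M := k))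
        ∘ₗ map LinearMap.id (φ ∘ₗ tau k H) := by
    ext; simp
  have P : tau k H ∘ₗ (TensorProduct.rid k (H ⊗[k] H)).toLinearMap
        ∘ₗ map (tau k H) (LinearMap.id (R := k) (M := k))
      = (TensorProduct.rid k (H ⊗[k] H)).toLinearMap := by
    ext; simp [tau]
  apply LinearMap.ext; intro x
  simp only [Tr, LinearMap.coe_comp, Function.comp_apply, LinearEquiv.coe_coe]
  have h1 : dd k H (tau k H x) = map (tau k H) (tau k H) (dd k H x) := by
    simpa only [LinearMap.coe_comp, Function.comp_apply] using
      LinearMap.congr_fun (dd_tau k H) x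
  have h2 : map LinearMap.id φ (map (tau k H) (tau k H) (dd k H x))
      = map (tau k H) LinearMap.id (map LinearMap.id (φ ∘ₗ tau k H) (dd k H x)) := by
    simpa only [LinearMap.coe_comp, Function.comp_apply] using
      LinearMap.congr_fun swap (dd k H x)
  rw [h1, h2]
  simpa only [LinearMap.coe_comp, Function.comp_apply, LinearEquiv.coe_coe] using
    LinearMap.congr_fun P (map LinearMap.id (φ ∘ₗ tau k H) (dd k H x))

lemma sig_eq (R Ri : H ⊗[k] H →ₗ[k] k) :
    sigR k H R Ri = tau k H ∘ₗ Tr k H R ∘ₗ Tl k H Ri := by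
  have swap1 : map (LinearMap.id (R := k) (M := k)) (dd k H) ∘ₗ map Ri LinearMap.id
      = map Ri LinearMap.id ∘ₗ map (LinearMap.id (R := k) (M := H ⊗[k] H)) (dd k H) := by
    ext; simp
  have P : (TensorProduct.rid k (H ⊗[k] H)).toLinearMap
        ∘ₗ map ((TensorProduct.lid k (H ⊗[k] H)).toLinearMap ∘ₗ map Ri (tau k H)) R
      = tau k H ∘ₗ (TensorProduct.rid k (H ⊗[k] H)).toLinearMap
        ∘ₗ map LinearMap.id R
        ∘ₗ (TensorProduct.lid k ((H ⊗[k] H) ⊗[k] (H ⊗[k] H))).toLinearMap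
        ∘ₗ map Ri LinearMap.id
        ∘ₗ (TensorProduct.assoc k (H ⊗[k] H) (H ⊗[k] H) (H ⊗[k] H)).toLinearMap := by
    ext a b c d e f
    simp only [LinearMap.coe_comp, Function.comp_apply, LinearEquiv.coe_coe, assoc_tmul,
      map_tmul, LinearMap.id_coe, id_eq, lid_tmul, rid_tmul, tau, comm_tmul, map_smul,
      smul_smul, AlgebraTensorModule.curry_apply, curry_apply,
      LinearMap.coe_restrictScalars, LinearMap.smul_apply, tmul_smul, smul_tmul',
      smul_eq_mul]
  apply LinearMap.ext; intro x
  simp only [sigR, ddd, Tl, Tr, LinearMap.coe_comp, Function.comp_apply,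
    LinearEquiv.coe_coe]
  set v := map (dd k H) LinearMap.id (dd k H x) with hv
  have h1 : dd k H ((TensorProduct.lid k (H ⊗[k] H)) (map Ri LinearMap.id (dd k H x)))
      = (TensorProduct.lid k ((H ⊗[k] H) ⊗[k] (H ⊗[k] H)))
          (map LinearMap.id (dd k H) (map Ri LinearMap.id (dd k H x))) := by
    simpa only [LinearMap.coe_comp, Function.comp_apply, LinearEquiv.coe_coe] using
      LinearMap.congr_fun (nat_lid k (dd k H)) (map Ri LinearMap.id (dd k H x))
  have h2 : map LinearMap.id (dd k H) (map Ri LinearMap.id (dd k H x))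
      = map Ri LinearMap.id (map LinearMap.id (dd k H) (dd k H x)) := by
    simpa only [LinearMap.coe_comp, Function.comp_apply] using
      LinearMap.congr_fun swap1 (dd k H x)
  have h3 : map LinearMap.id (dd k H) (dd k H x)
      = (TensorProduct.assoc k (H ⊗[k] H) (H ⊗[k] H) (H ⊗[k] H)).toLinearMap v := by
    simpa only [LinearMap.coe_comp, Function.comp_apply] using
      LinearMap.congr_fun (dd_coassoc k H) x
  rw [h1, h2, h3]
  simpa only [LinearMap.coe_comp, Function.comp_apply, LinearEquiv.coe_coe] using
    LinearMap.congr_fun P v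

lemma sig_sig (R Ri : H ⊗[k] H →ₗ[k] k) :
    sigR k H R Ri ∘ₗ sigR k H R Ri
      = Tr k H (cv k H (R ∘ₗ tau k H) R) ∘ₗ Tl k H (cv k H Ri (Ri ∘ₗ tau k H)) := by
  have hTl : ∀ z, Tl k H Ri (tau k H z) = tau k H (Tl k H (Ri ∘ₗ tau k H) z) := by
    intro z
    have h1 : tau k H (Tl k H Ri (tau k H z)) = Tl k H (Ri ∘ₗ tau k H) z := by
      simpa only [LinearMap.coe_comp, Function.comp_apply] using
        LinearMap.congr_fun (tau_Tl k H Ri) z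
    have h2 : ∀ y, tau k H (tau k H y) = y := fun y => by
      simpa only [LinearMap.coe_comp, Function.comp_apply, LinearMap.id_coe, id_eq] using
        LinearMap.congr_fun (tau_invol k H) y
    rw [← h1, h2]
  have hTr : ∀ w, tau k H (Tr k H R (tau k H w)) = Tr k H (R ∘ₗ tau k H) w := by
    intro w
    simpa only [LinearMap.coe_comp, Function.comp_apply] using
      LinearMap.congr_fun (tau_Tr k H R) w
  apply LinearMap.ext; intro x
  simp only [LinearMap.coe_comp, Function.comp_apply]
  have hs : ∀ y, sigR k H R Ri y = tau k H (Tr k H R (Tl k H Ri y)) := fun y => by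
    simpa only [LinearMap.coe_comp, Function.comp_apply] using
      LinearMap.congr_fun (sig_eq k H R Ri) y
  rw [hs, hs, hTl, hTr]
  have hcomm : Tl k H (Ri ∘ₗ tau k H) (Tr k H R (Tl k H Ri x))
      = Tr k H R (Tl k H (Ri ∘ₗ tau k H) (Tl k H Ri x)) := by
    simpa only [LinearMap.coe_comp, Function.comp_apply] using
      LinearMap.congr_fun (TlTr_comm k H (Ri ∘ₗ tau k H) R) (Tl k H Ri x)
  rw [hcomm]
  have h4 : Tr k H (R ∘ₗ tau k H) (Tr k H R (Tl k H (Ri ∘ₗ tau k H) (Tl k H Ri x)))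
      = Tr k H (cv k H (R ∘ₗ tau k H) R) (Tl k H (Ri ∘ₗ tau k H) (Tl k H Ri x)) := by
    simpa only [LinearMap.coe_comp, Function.comp_apply] using
      LinearMap.congr_fun (Tr_comp k H (R ∘ₗ tau k H) R) (Tl k H (Ri ∘ₗ tau k H) (Tl k H Ri x))
  rw [h4]
  have h5 : Tl k H (Ri ∘ₗ tau k H) (Tl k H Ri x)
      = Tl k H (cv k H Ri (Ri ∘ₗ tau k H)) x := by
    simpa only [LinearMap.coe_comp, Function.comp_apply] using
      LinearMap.congr_fun (Tl_comp k H (Ri ∘ₗ tau k H) Ri) x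
  rw [h5]


/-- Remark 5.3: for a coquasitriangular bialgebra `(H,R)`,
`σ∘σ = Id` iff `Id ∗ (R^op ∗ R) = (R^op ∗ R) ∗ Id` in the convolution algebra; in
particular if `R` is cotriangular (`R^op = R⁻¹`) then `σ` is involutive. -/
theorem sigR_involutive_iff_killing_central
    (R Ri : H ⊗[k] H →ₗ[k] k)
    -- `Ri` is the convolution inverse of `R`:
    (hconv1 : LinearMap.mul' k k ∘ₗ map R Ri ∘ₗ dd k H = epseps k H)
    (hconv2 : LinearMap.mul' k k ∘ₗ map Ri R ∘ₗ dd k H = epseps k H)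
    -- (coqt.1): `R(a₁⊗b₁)a₂b₂ = b₁a₁R(a₂⊗b₂)`:
    (hcoqt1 : (TensorProduct.lid k H).toLinearMap ∘ₗ map R (mu k H) ∘ₗ dd k H
        = (TensorProduct.rid k H).toLinearMap ∘ₗ map (mu k H ∘ₗ tau k H) R ∘ₗ dd k H)
    -- (coqt.2): `R(a⊗bc) = R(a₁⊗c)R(a₂⊗b)`:
    (hcoqt2 : R ∘ₗ map LinearMap.id (mu k H)
        = LinearMap.mul' k k ∘ₗ map R R ∘ₗ ttcMap k H ∘ₗ map (delta k H) (tau k H))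
    -- (coqt.3): `R(ab⊗c) = R(a⊗c₁)R(b⊗c₂)`:
    (hcoqt3 : R ∘ₗ map (mu k H) LinearMap.id
        = LinearMap.mul' k k ∘ₗ map R R ∘ₗ ttcMap k H ∘ₗ map LinearMap.id (delta k H))
    :
    ((sigR k H R Ri ∘ₗ sigR k H R Ri = LinearMap.id) ↔
      ((TensorProduct.rid k (H ⊗[k] H)).toLinearMap ∘ₗ
          map LinearMap.id (killing k H R) ∘ₗ dd k H
        = (TensorProduct.lid k (H ⊗[k] H)).toLinearMap ∘ₗ
            map (killing k H R) LinearMap.id ∘ₗ dd k H)) ∧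
    (R ∘ₗ tau k H = Ri → sigR k H R Ri ∘ₗ sigR k H R Ri = LinearMap.id) := by
  have f1 : cv k H R Ri = epseps k H := hconv1
  have f2 : cv k H Ri R = epseps k H := hconv2
  have f3 : cv k H (R ∘ₗ tau k H) (Ri ∘ₗ tau k H) = epseps k H := by
    rw [cv_op, f1, eps_tau]
  have f4 : cv k H (Ri ∘ₗ tau k H) (R ∘ₗ tau k H) = epseps k H := by
    rw [cv_op, f2, eps_tau]
  set Q := cv k H (R ∘ₗ tau k H) R with hQdef
  set Qi := cv k H Ri (Ri ∘ₗ tau k H) with hQidef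
  have hkill : killing k H R = Q := rfl
  have hQQi : cv k H Q Qi = epseps k H := by
    rw [hQdef, cv_assoc, hQidef, ← cv_assoc k H R Ri (Ri ∘ₗ tau k H), f1, cv_eps_left, f3]
  have hQiQ : cv k H Qi Q = epseps k H := by
    rw [hQidef, cv_assoc, hQdef, ← cv_assoc k H (Ri ∘ₗ tau k H) (R ∘ₗ tau k H) R, f4,
      cv_eps_left, f2]
  have hiff : (sigR k H R Ri ∘ₗ sigR k H R Ri = LinearMap.id) ↔
      (Tr k H (killing k H R) = Tl k H (killing k H R)) := by
    rw [hkill]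
    constructor
    · intro h
      have hs : Tr k H Q ∘ₗ Tl k H Qi = LinearMap.id := by rw [← sig_sig]; exact h
      have hTlid : Tl k H Qi ∘ₗ Tl k H Q = LinearMap.id := by
        rw [Tl_comp, hQQi, Tl_eps]
      calc Tr k H Q = Tr k H Q ∘ₗ (Tl k H Qi ∘ₗ Tl k H Q) := by
            rw [hTlid, LinearMap.comp_id]
        _ = (Tr k H Q ∘ₗ Tl k H Qi) ∘ₗ Tl k H Q := by rw [LinearMap.comp_assoc]
        _ = Tl k H Q := by rw [hs, LinearMap.id_comp]
    · intro h
      rw [sig_sig, ← hQdef, ← hQidef, h, Tl_comp, hQiQ, Tl_eps]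
  refine ⟨hiff, ?_⟩
  intro hop
  have hQ : killing k H R = epseps k H := by rw [hkill, hQdef, hop]; exact f2
  apply hiff.mpr
  rw [hQ, Tl_eps, Tr_eps]


end
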